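/- arXiv:2411.04104 — 2 statements merged into one kernel-verified Lean document; each statement's English description precedes it below -/
import Mathlib

section
/- Subadditivity of the Hilbert–Schmidt distance: for any N×N unitary matrices A and B, sqrt(1 - |Tr(AB)|²/N²) ≤ sqrt(1 - |Tr(A)|²/N²) + sqrt(1 - |Tr(B)|²/N²). -/
open Matrix

private 
lemma cs_trace (N : ℕ) (M Q : Matrix (Fin N) (Fin N) ℂ) :
    ‖(Mᴴ * Q).trace‖ ≤
      Real.sqrt (((Mᴴ * M).trace).re) * Real.sqrt (((Qᴴ * Q).trace).re) := by
  set u : EuclideanSpace ℂ (Fin N × Fin N) := WithLp.toLp 2 (fun p : Fin N × Fin N => M p.1 p.2) with hu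
  set v : EuclideanSpace ℂ (Fin N × Fin N) := WithLp.toLp 2 (fun p : Fin N × Fin N => Q p.1 p.2) with hv
  have h1 : (Mᴴ * Q).trace = inner ℂ u v := by
    simp [Matrix.trace, Matrix.diag, Matrix.mul_apply, PiLp.inner_apply, hu, hv,
      Fintype.sum_prod_type, Matrix.conjTranspose_apply, mul_comm]
    rw [Finset.sum_comm]
  have key : ∀ P : Matrix (Fin N) (Fin N) ℂ,
      ((Pᴴ * P).trace).re = ∑ p : Fin N × Fin N, ‖P p.1 p.2‖^2 := by
    intro P
    simp [Matrix.trace, Matrix.diag, Matrix.mul_apply, Fintype.sum_prod_type,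
      Matrix.conjTranspose_apply, Complex.ext_iff]
    rw [Finset.sum_comm]
    congr 1; ext i; congr 1; ext j
    rw [← Complex.normSq_apply, Complex.sq_norm, Complex.normSq_eq_norm_sq, Complex.sq_norm, Complex.normSq_apply]
  have h2 : Real.sqrt (((Mᴴ * M).trace).re) = ‖u‖ := by
    rw [key M, EuclideanSpace.norm_eq]

  have h3 : Real.sqrt (((Qᴴ * Q).trace).re) = ‖v‖ := by
    rw [key Q, EuclideanSpace.norm_eq]

  rw [h1, h2, h3]
  exact norm_inner_le_norm u v

private lemma real_step (a b c : ℝ) (ha : 0 ≤ a) (ha1 : a ≤ 1) (hb : 0 ≤ b) (hb1 : b ≤ 1)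
    (hc : 0 ≤ c)
    (h : a * b - Real.sqrt (1 - a ^ 2) * Real.sqrt (1 - b ^ 2) ≤ c) :
    Real.sqrt (1 - c ^ 2) ≤ Real.sqrt (1 - a ^ 2) + Real.sqrt (1 - b ^ 2) := by
  set sa := Real.sqrt (1 - a ^ 2) with hsa
  set sb := Real.sqrt (1 - b ^ 2) with hsb
  have hsa0 : 0 ≤ sa := Real.sqrt_nonneg _
  have hsb0 : 0 ≤ sb := Real.sqrt_nonneg _
  have hsa2 : sa ^ 2 = 1 - a ^ 2 := Real.sq_sqrt (by nlinarith)
  have hsb2 : sb ^ 2 = 1 - b ^ 2 := Real.sq_sqrt (by nlinarith)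
  have key : 1 - c ^ 2 ≤ (sa + sb) ^ 2 := by
    rcases le_or_gt (a * b) (sa * sb) with hab | hab
    · nlinarith [sq_nonneg c, sq_nonneg (sa - sb), sq_nonneg (sa + sb)]
    · have hd0 : 0 ≤ a * b - sa * sb := le_of_lt (sub_pos.mpr hab)
      have hc2 : (a * b - sa * sb) ^ 2 ≤ c ^ 2 := pow_le_pow_left₀ hd0 h 2
      have hid : 1 - (a * b - sa * sb) ^ 2 = (sa * b + a * sb) ^ 2 := by
        linear_combination (-(b ^ 2) - sb ^ 2) * hsa2 - hsb2
      have hle : sa * b + a * sb ≤ sa + sb := by nlinarith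
      have h2 : (sa * b + a * sb) ^ 2 ≤ (sa + sb) ^ 2 :=
        pow_le_pow_left₀ (by positivity) hle 2
      linarith
  calc Real.sqrt (1 - c ^ 2) ≤ Real.sqrt ((sa + sb) ^ 2) := Real.sqrt_le_sqrt key
    _ = sa + sb := Real.sqrt_sq (by positivity)

theorem hs_subadditive (N : ℕ) (A B : Matrix (Fin N) (Fin N) ℂ)
    (hA : A ∈ Matrix.unitaryGroup (Fin N) ℂ)
    (hB : B ∈ Matrix.unitaryGroup (Fin N) ℂ) :
    Real.sqrt (1 - ‖(A * B).trace‖ ^ 2 / (N : ℝ) ^ 2) ≤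
      Real.sqrt (1 - ‖A.trace‖ ^ 2 / (N : ℝ) ^ 2) +
      Real.sqrt (1 - ‖B.trace‖ ^ 2 / (N : ℝ) ^ 2) := by
  rcases Nat.eq_zero_or_pos N with hN | hN
  · subst hN
    simp [Matrix.trace]
  have hn : (0:ℝ) < N := by exact_mod_cast hN
  have hnC : ((N:ℂ)) ≠ 0 := by exact_mod_cast hN.ne'
  have hAu : Aᴴ * A = 1 := by
    have := hA.1; rwa [Matrix.star_eq_conjTranspose] at this
  have hAu' : A * Aᴴ = 1 := by
    have := hA.2; rwa [Matrix.star_eq_conjTranspose] at this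
  have hBu : Bᴴ * B = 1 := by
    have := hB.1; rwa [Matrix.star_eq_conjTranspose] at this
  have htr1 : (Matrix.trace (1 : Matrix (Fin N) (Fin N) ℂ)) = (N:ℂ) := by
    simp [Matrix.trace_one]
  -- bound: |Tr U| ≤ N for unitary U
  have bound : ∀ U : Matrix (Fin N) (Fin N) ℂ, Uᴴ * U = 1 →
      ‖U.trace‖ ≤ N := by
    intro U hU
    have h := cs_trace N 1 U
    simp only [Matrix.conjTranspose_one, Matrix.one_mul, hU, htr1] at h
    have : Real.sqrt ((N:ℂ)).re = Real.sqrt N := by norm_num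
    rw [this] at h
    calc ‖U.trace‖ ≤ Real.sqrt N * Real.sqrt N := h
      _ = N := Real.mul_self_sqrt hn.le
  have hABu : (A*B)ᴴ * (A*B) = 1 := by
    rw [Matrix.conjTranspose_mul, Matrix.mul_assoc, ← Matrix.mul_assoc Aᴴ A B, hAu,
      Matrix.one_mul, hBu]
  set a := ‖A.trace‖ with ha_def
  set b := ‖B.trace‖ with hb_def
  set c := ‖(A*B).trace‖ with hc_def
  have haN : a ≤ N := bound A hAu
  have hbN : b ≤ N := bound B hBu
  have hcN : c ≤ N := bound _ hABu
  -- key CS estimate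
  set x : ℂ := A.trace / N with hx
  set y : ℂ := B.trace / N with hy
  set M := Aᴴ - (starRingEnd ℂ x) • (1 : Matrix (Fin N) (Fin N) ℂ) with hM
  set Q := B - y • (1 : Matrix (Fin N) (Fin N) ℂ) with hQ
  have hMH : Mᴴ = A - x • 1 := by
    simp [hM, Matrix.conjTranspose_sub, Matrix.conjTranspose_smul,
      Matrix.conjTranspose_one, Matrix.conjTranspose_conjTranspose]
  have e1 : (Mᴴ * Q).trace = (A*B).trace - A.trace * B.trace / N := by
    rw [hMH, hQ]
    simp only [Matrix.sub_mul, Matrix.mul_sub, Matrix.smul_mul, Matrix.mul_smul,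
      Matrix.one_mul, Matrix.mul_one, Matrix.trace_sub, Matrix.trace_smul, htr1,
      smul_eq_mul, smul_smul]
    rw [hx, hy]
    field_simp
    ring
  have habs : ∀ z : ℂ, (starRingEnd ℂ z) * z = ((‖z‖ : ℝ) : ℂ)^2 := by
    intro z
    rw [← Complex.normSq_eq_conj_mul_self]
    push_cast [Complex.normSq_eq_norm_sq]
    ring
  have e2 : (Mᴴ * M).trace = ((N:ℝ):ℂ) - ((a:ℝ):ℂ)^2 / N := by
    rw [hMH, hM]
    simp only [Matrix.sub_mul, Matrix.mul_sub, Matrix.smul_mul, Matrix.mul_smul,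
      Matrix.one_mul, Matrix.mul_one, Matrix.trace_sub, Matrix.trace_smul, htr1,
      smul_eq_mul, smul_smul, hAu', Matrix.trace_conjTranspose,
      Matrix.star_eq_conjTranspose]
    rw [hx, ha_def]
    rw [show (starRingEnd ℂ) (A.trace / ↑N) = (starRingEnd ℂ A.trace) / N by
      simp [map_div₀]]
    field_simp
    rw [show A.trace * (star A.trace) = ((‖A.trace‖:ℝ):ℂ)^2 by
      rw [mul_comm]; exact habs _]
    push_cast; ring
  have e3 : (Qᴴ * Q).trace = ((N:ℝ):ℂ) - ((b:ℝ):ℂ)^2 / N := by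
    rw [hQ]
    simp only [Matrix.conjTranspose_sub, Matrix.conjTranspose_smul,
      Matrix.conjTranspose_one, Matrix.sub_mul, Matrix.mul_sub, Matrix.smul_mul,
      Matrix.mul_smul, Matrix.one_mul, Matrix.mul_one, Matrix.trace_sub,
      Matrix.trace_smul, htr1, smul_eq_mul, smul_smul, hBu,
      Matrix.trace_conjTranspose, Matrix.star_eq_conjTranspose]
    rw [hy, hb_def]
    simp only [star_div₀, star_natCast]
    field_simp
    rw [show star B.trace * B.trace = ((‖B.trace‖:ℝ):ℂ)^2 from habs _]
    push_cast; ring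
  -- real parts
  have r2 : ((Mᴴ * M).trace).re = (N:ℝ) - a^2/(N:ℝ) := by
    have : (((N:ℝ) - a^2/(N:ℝ) : ℝ) : ℂ) = ((N:ℝ):ℂ) - ((a:ℝ):ℂ)^2 / (N:ℕ) := by
      push_cast; ring
    rw [e2, ← this, Complex.ofReal_re]
  have r3 : ((Qᴴ * Q).trace).re = (N:ℝ) - b^2/(N:ℝ) := by
    have : (((N:ℝ) - b^2/(N:ℝ) : ℝ) : ℂ) = ((N:ℝ):ℂ) - ((b:ℝ):ℂ)^2 / (N:ℕ) := by
      push_cast; ring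
    rw [e3, ← this, Complex.ofReal_re]
  set sa := Real.sqrt (1 - (a/N)^2) with hsa
  set sb := Real.sqrt (1 - (b/N)^2) with hsb
  have sqrt2 : Real.sqrt ((N:ℝ) - a^2/(N:ℝ)) = Real.sqrt N * sa := by
    rw [hsa, ← Real.sqrt_mul hn.le]
    congr 1
    field_simp
  have sqrt3 : Real.sqrt ((N:ℝ) - b^2/(N:ℝ)) = Real.sqrt N * sb := by
    rw [hsb, ← Real.sqrt_mul hn.le]
    congr 1
    field_simp
  have key := cs_trace N M Q
  rw [e1, r2, r3, sqrt2, sqrt3] at key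
  have key' : ‖(A*B).trace - A.trace * B.trace / N‖ ≤ (N:ℝ) * (sa * sb) := by
    calc ‖(A*B).trace - A.trace * B.trace / N‖
        ≤ Real.sqrt N * sa * (Real.sqrt N * sb) := key
      _ = (Real.sqrt N * Real.sqrt N) * (sa * sb) := by ring
      _ = (N:ℝ) * (sa * sb) := by rw [Real.mul_self_sqrt hn.le]
  have habsw : ‖A.trace * B.trace / N‖ = a * b / N := by
    rw [norm_div, norm_mul, ha_def, hb_def, Complex.norm_natCast]
  have tri : a * b / N - ‖(A*B).trace - A.trace * B.trace / N‖ ≤ c := by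
    have h1 : ‖A.trace * B.trace / N‖ -
        ‖(A.trace * B.trace / N) - (A*B).trace‖ ≤ ‖(A*B).trace‖ := by
      have := norm_sub_norm_le (A.trace * B.trace / N) ((A.trace * B.trace / N) - (A*B).trace)
      simpa using this
    rw [habsw] at h1
    rw [show (A*B).trace - A.trace * B.trace / N
        = -((A.trace * B.trace / N) - (A*B).trace) by ring, norm_neg]
    exact h1
  have hfin : a * b / N - (N:ℝ) * (sa * sb) ≤ c := by linarith
  have hstep : (a/N) * (b/N) - sa * sb ≤ c/N := by
    rw [show (a/N) * (b/N) - sa * sb = (a * b / N - (N:ℝ) * (sa * sb))/N by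
      field_simp]
    exact (div_le_div_iff_of_pos_right hn).mpr hfin
  rw [show ‖(A*B).trace‖ ^ 2 / (N:ℝ)^2 = (c/N)^2 by rw [div_pow],
    show ‖A.trace‖ ^ 2 / (N:ℝ)^2 = (a/N)^2 by rw [div_pow],
    show ‖B.trace‖ ^ 2 / (N:ℝ)^2 = (b/N)^2 by rw [div_pow]]
  rw [← hsa, ← hsb]
  exact real_step (a/N) (b/N) (c/N) (by positivity) ((div_le_one hn).mpr haN)
    (by positivity) ((div_le_one hn).mpr hbN) (by positivity) hstep
end

section
/- Triangle inequality for the Hilbert–Schmidt distance: for N×N unitaries U, U', U'', Δ(U,U'') ≤ Δ(U,U') + Δ(U',U''), where Δ(A,B) := sqrt(1 - |Tr(A†B)|²/N²). -/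
open scoped Matrix
open scoped InnerProductSpace

noncomputable def hsDist {N : ℕ} (U V : Matrix (Fin N) (Fin N) ℂ) : ℝ :=
  Real.sqrt (1 - ‖(Uᴴ * V).trace‖ ^ 2 / (N : ℝ) ^ 2)

private lemma hs_aux_real (a b c sa sb : ℝ) (ha : 0 ≤ a) (hb : 0 ≤ b) (hc : 0 ≤ c)
    (ha1 : a ≤ 1) (hb1 : b ≤ 1)
    (hsa : 0 ≤ sa) (hsb : 0 ≤ sb) (hsa2 : sa^2 = 1 - a^2) (hsb2 : sb^2 = 1 - b^2)
    (hkey : a*b - sa*sb ≤ c) :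
    Real.sqrt (1 - c^2) ≤ sa + sb := by
  have h0 : 0 ≤ sa + sb := by linarith
  rw [show sa + sb = Real.sqrt ((sa+sb)^2) from (Real.sqrt_sq h0).symm]
  apply Real.sqrt_le_sqrt
  rcases le_or_gt 1 ((sa+sb)^2) with h | h
  · nlinarith [sq_nonneg c]
  · have hab : sa*sb ≤ a*b := by nlinarith [mul_nonneg hsa hsb]
    have h1 : (a*b - sa*sb)^2 ≤ c^2 := by nlinarith
    nlinarith [mul_nonneg (mul_nonneg hsb (sub_nonneg.2 ha1)) hsa,
      mul_nonneg (mul_nonneg hsa (sub_nonneg.2 hb1)) hsb,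
      mul_nonneg (sub_nonneg.2 ha1) (sub_nonneg.2 hb1),
      mul_nonneg hsa hsb, sq_nonneg (a*sb + b*sa)]

private lemma hs_sine_triangle {E : Type*} [NormedAddCommGroup E] [InnerProductSpace ℂ E]
    (x y z : E) (hx : ‖x‖ = 1) (hy : ‖y‖ = 1) (hz : ‖z‖ = 1) :
    Real.sqrt (1 - ‖⟪x, z⟫_ℂ‖^2) ≤
      Real.sqrt (1 - ‖⟪x, y⟫_ℂ‖^2) + Real.sqrt (1 - ‖⟪y, z⟫_ℂ‖^2) := by
  set α := ⟪x, y⟫_ℂ with hα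
  set β := ⟪y, z⟫_ℂ with hβ
  set γ := ⟪x, z⟫_ℂ with hγ
  have hyy : ⟪y, y⟫_ℂ = 1 := by
    rw [inner_self_eq_norm_sq_to_K, hy]; norm_num
  have hxx : ⟪x, x⟫_ℂ = 1 := by
    rw [inner_self_eq_norm_sq_to_K, hx]; norm_num
  have hzz : ⟪z, z⟫_ℂ = 1 := by
    rw [inner_self_eq_norm_sq_to_K, hz]; norm_num
  have hzy : ⟪z, y⟫_ℂ = starRingEnd ℂ β := by rw [hβ, inner_conj_symm]
  set x' := x - (starRingEnd ℂ α) • y with hx'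
  set z' := z - β • y with hz'
  have hms : ∀ w : ℂ, w * starRingEnd ℂ w = (‖w‖:ℂ)^2 := Complex.mul_conj'
  have hyx : ⟪y, x⟫_ℂ = starRingEnd ℂ α := by rw [hα, inner_conj_symm]
  have hinner : ⟪x', z'⟫_ℂ = γ - α * β := by
    rw [hx', hz', inner_sub_left, inner_sub_right, inner_sub_right,
      inner_smul_left, inner_smul_left, inner_smul_right, inner_smul_right, hyy]
    simp only [Complex.conj_conj]
    rw [← hα, ← hβ, ← hγ]
    ring
  have hxnorm : (‖x'‖ : ℝ)^2 = 1 - ‖α‖^2 := by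
    have h : ⟪x', x'⟫_ℂ = 1 - (‖α‖:ℂ)^2 := by
      rw [hx', inner_sub_left, inner_sub_right, inner_sub_right,
        inner_smul_left, inner_smul_left, inner_smul_right, inner_smul_right,
        hyy, hxx]
      simp only [Complex.conj_conj]
      rw [hyx, ← hms α]
      ring
    rw [inner_self_eq_norm_sq_to_K] at h
    have := congrArg Complex.re h
    simpa [← Complex.ofReal_pow] using this
  have hznorm : (‖z'‖ : ℝ)^2 = 1 - ‖β‖^2 := by
    have h : ⟪z', z'⟫_ℂ = 1 - (‖β‖:ℂ)^2 := by
      rw [hz', inner_sub_left, inner_sub_right, inner_sub_right,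
        inner_smul_left, inner_smul_left, inner_smul_right, inner_smul_right,
        hyy, hzz, hzy, ← hβ, mul_one, ← hms β]
      ring
    rw [inner_self_eq_norm_sq_to_K] at h
    have := congrArg Complex.re h
    simpa [← Complex.ofReal_pow] using this
  have hcs : ‖γ - α * β‖ ≤ ‖x'‖ * ‖z'‖ := hinner ▸ norm_inner_le_norm x' z'
  have ha1 : ‖α‖ ≤ 1 := by
    have := norm_inner_le_norm (𝕜 := ℂ) x y; rw [hx, hy] at this; simpa [← hα] using this
  have hb1 : ‖β‖ ≤ 1 := by
    have := norm_inner_le_norm (𝕜 := ℂ) y z; rw [hy, hz] at this; simpa [← hβ] using this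
  have hc1 : ‖γ‖ ≤ 1 := by
    have := norm_inner_le_norm (𝕜 := ℂ) x z; rw [hx, hz] at this; simpa [← hγ] using this
  have hxe : ‖x'‖ = Real.sqrt (1 - ‖α‖^2) := by
    rw [← hxnorm, Real.sqrt_sq (norm_nonneg _)]
  have hze : ‖z'‖ = Real.sqrt (1 - ‖β‖^2) := by
    rw [← hznorm, Real.sqrt_sq (norm_nonneg _)]
  have hkey : ‖α‖ * ‖β‖ - Real.sqrt (1 - ‖α‖^2) * Real.sqrt (1 - ‖β‖^2) ≤ ‖γ‖ := by
    have h1 : ‖α * β‖ - ‖γ‖ ≤ ‖γ - α * β‖ := by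
      have := norm_sub_norm_le (α * β) γ
      rw [norm_sub_rev] at this
      linarith [this]
    rw [norm_mul] at h1
    rw [hxe, hze] at hcs
    linarith
  refine hs_aux_real ‖α‖ ‖β‖ ‖γ‖ _ _ (norm_nonneg _) (norm_nonneg _) (norm_nonneg _) ha1 hb1
    (Real.sqrt_nonneg _) (Real.sqrt_nonneg _) ?_ ?_ hkey
  · rw [Real.sq_sqrt (by nlinarith [norm_nonneg α] : (0:ℝ) ≤ 1 - ‖α‖^2)]
  · rw [Real.sq_sqrt (by nlinarith [norm_nonneg β] : (0:ℝ) ≤ 1 - ‖β‖^2)]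

noncomputable def hsMatVec {N : ℕ} (A : Matrix (Fin N) (Fin N) ℂ) :
    EuclideanSpace ℂ (Fin N × Fin N) := WithLp.toLp 2 (fun p : Fin N × Fin N => A p.2 p.1)

private lemma hsMatVec_inner {N : ℕ} (A B : Matrix (Fin N) (Fin N) ℂ) :
    ⟪hsMatVec A, hsMatVec B⟫_ℂ = (Aᴴ * B).trace := by
  simp only [PiLp.inner_apply, RCLike.inner_apply, hsMatVec, Matrix.trace,
    Matrix.diag_apply, Matrix.mul_apply, Matrix.conjTranspose_apply, PiLp.toLp_apply]
  rw [← Finset.sum_product']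
  exact Finset.sum_congr rfl (fun _ _ => mul_comm _ _)

private lemma hsMatVec_norm {N : ℕ} (U : Matrix (Fin N) (Fin N) ℂ)
    (hU : U ∈ Matrix.unitaryGroup (Fin N) ℂ) : ‖hsMatVec U‖ = Real.sqrt N := by
  have h1 : Uᴴ * U = 1 := by
    have := hU.1
    rwa [Matrix.star_eq_conjTranspose] at this
  have h : ⟪hsMatVec U, hsMatVec U⟫_ℂ = (N : ℂ) := by
    rw [hsMatVec_inner, h1, Matrix.trace_one]
    simp
  rw [inner_self_eq_norm_sq_to_K] at h
  have h2 : (‖hsMatVec U‖ : ℝ)^2 = N := by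
    have := congrArg Complex.re h
    simpa [← Complex.ofReal_pow] using this
  rw [← h2, Real.sqrt_sq (norm_nonneg _)]

private lemma hsDist_eq {N : ℕ} (hN : 0 < N) (U V : Matrix (Fin N) (Fin N) ℂ)
    (x z : EuclideanSpace ℂ (Fin N × Fin N))
    (hiz : ⟪x, z⟫_ℂ = ((Real.sqrt N)⁻¹^2 : ℝ) • (Uᴴ * V).trace) :
    hsDist U V = Real.sqrt (1 - ‖⟪x, z⟫_ℂ‖^2) := by
  have hN0 : (0:ℝ) < N := by exact_mod_cast hN
  rw [hsDist, hiz]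
  congr 1
  rw [norm_smul]
  have h1 : ‖(Real.sqrt N)⁻¹^2‖ = (N:ℝ)⁻¹ := by
    rw [norm_pow, norm_inv, Real.norm_eq_abs, abs_of_nonneg (Real.sqrt_nonneg _),
      inv_pow, Real.sq_sqrt hN0.le]
  rw [h1, mul_pow, div_eq_mul_inv]
  ring_nf

theorem hsDist_triangle (N : ℕ) (U U' U'' : Matrix (Fin N) (Fin N) ℂ)
    (hU : U ∈ Matrix.unitaryGroup (Fin N) ℂ)
    (hU' : U' ∈ Matrix.unitaryGroup (Fin N) ℂ)
    (hU'' : U'' ∈ Matrix.unitaryGroup (Fin N) ℂ) :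
    hsDist U U'' ≤ hsDist U U' + hsDist U' U'' := by
  rcases Nat.eq_zero_or_pos N with hN | hN
  · subst hN
    have h : ∀ A B : Matrix (Fin 0) (Fin 0) ℂ, hsDist A B = 1 := by
      intro A B
      simp [hsDist, Matrix.trace]
    rw [h, h, h]; norm_num
  · have hN0 : (0:ℝ) < N := by exact_mod_cast hN
    have hs0 : (0:ℝ) < Real.sqrt N := Real.sqrt_pos.2 hN0
    set r : ℝ := (Real.sqrt N)⁻¹ with hr
    have hrc : starRingEnd ℂ (r:ℂ) = (r:ℂ) := Complex.conj_ofReal r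
    set x := (r:ℂ) • hsMatVec U with hxd
    set y := (r:ℂ) • hsMatVec U' with hyd
    set z := (r:ℂ) • hsMatVec U'' with hzd
    have hnorm : ∀ (W : Matrix (Fin N) (Fin N) ℂ), W ∈ Matrix.unitaryGroup (Fin N) ℂ →
        ‖(r:ℂ) • hsMatVec W‖ = 1 := by
      intro W hW
      rw [norm_smul, hsMatVec_norm W hW, Complex.norm_real, Real.norm_eq_abs,
        abs_of_nonneg (inv_nonneg.2 (Real.sqrt_nonneg _))]
      exact inv_mul_cancel₀ hs0.ne'
    have hinner : ∀ (A B : Matrix (Fin N) (Fin N) ℂ),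
        ⟪(r:ℂ) • hsMatVec A, (r:ℂ) • hsMatVec B⟫_ℂ = (r^2 : ℝ) • (Aᴴ * B).trace := by
      intro A B
      rw [inner_smul_left, inner_smul_right, hrc, hsMatVec_inner, Complex.real_smul]
      push_cast
      ring
    have h1 := hsDist_eq hN U U'' x z (by rw [hxd, hzd, hinner])
    have h2 := hsDist_eq hN U U' x y (by rw [hxd, hyd, hinner])
    have h3 := hsDist_eq hN U' U'' y z (by rw [hyd, hzd, hinner])
    rw [h1, h2, h3]
    exact hs_sine_triangle x y z (hnorm U hU) (hnorm U' hU') (hnorm U'' hU'')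
end
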